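/- arXiv:2205.01985 — 2 statements merged into one kernel-verified Lean document; each statement's English description precedes it below -/
import Mathlib

section
/- Let G=(V,E) be a finite simple undirected graph and let λ_v ∈ [0,1) for all v ∈ V. Set η_v = (1−λ_v)/(1+λ_v) for each v ∈ V. Then ∏_{C∈κ(V,E)} (1 + ∏_{u∈C} λ_u) = (∏_{v∈V}(1+λ_v)) · (1/2)^{|E|} · Σ_{E'⊆E} ∏_{u∈odd(E')} η_u, where κ(V,E) is the set of vertex sets of connected components of G and odd(E') is the set of vertices of odd degree in the graph (V,E'). -/
open Finset
open scoped Classical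

noncomputable section

variable {V : Type*} [Fintype V] [DecidableEq V]

/-- The vertex set of the connected component of `v` in the graph `(V, S)`. -/
def compOf (S : Finset (Sym2 V)) (v : V) : Finset V :=
  Finset.univ.filter fun u => (SimpleGraph.fromEdgeSet (↑S : Set (Sym2 V))).Reachable v u

/-- `κ(V,S)`: the set of vertex sets of connected components of the graph `(V, S)`. -/
def kappa (S : Finset (Sym2 V)) : Finset (Finset V) :=
  Finset.univ.image (compOf S)

/-- `∏_{C ∈ κ(V,S)} (1 + ∏_{u ∈ C} λ_u)`. -/
def clusterProd (S : Finset (Sym2 V)) (lam : V → ℝ) : ℝ :=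
  ∏ C ∈ kappa S, (1 + ∏ u ∈ C, lam u)

/-- Weight of an edge subset `S ⊆ E₀` in the weighted random cluster model. -/
def wtWRC (E₀ : Finset (Sym2 V)) (q : Sym2 V → ℝ) (lam : V → ℝ) (S : Finset (Sym2 V)) : ℝ :=
  (∏ e ∈ S, q e) * (∏ f ∈ E₀ \ S, (1 - q f)) * clusterProd S lam

/-- Partition function of the weighted random cluster model. -/
def ZWRC (E₀ : Finset (Sym2 V)) (q : Sym2 V → ℝ) (lam : V → ℝ) : ℝ :=
  ∑ S ∈ E₀.powerset, wtWRC E₀ q lam S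

/-- The weighted random cluster distribution. -/
def piWRC (E₀ : Finset (Sym2 V)) (q : Sym2 V → ℝ) (lam : V → ℝ) (S : Finset (Sym2 V)) : ℝ :=
  wtWRC E₀ q lam S / ZWRC E₀ q lam

/-- The monochromatic edges of a spin configuration `σ`. -/
def monoEdges (E₀ : Finset (Sym2 V)) (σ : V → Bool) : Finset (Sym2 V) :=
  E₀.filter fun e => (e.map σ).IsDiag

/-- Weight of a spin configuration in the Ising model. -/
def wtIsing (E₀ : Finset (Sym2 V)) (β : Sym2 V → ℝ) (lam : V → ℝ) (σ : V → Bool) : ℝ :=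
  (∏ e ∈ monoEdges E₀ σ, β e) * ∏ v : V, (if σ v then lam v else 1)

/-- Ising partition function. -/
def ZIsing (E₀ : Finset (Sym2 V)) (β : Sym2 V → ℝ) (lam : V → ℝ) : ℝ :=
  ∑ σ : V → Bool, wtIsing E₀ β lam σ

/-- Ising Gibbs distribution. -/
def piIsing (E₀ : Finset (Sym2 V)) (β : Sym2 V → ℝ) (lam : V → ℝ) (σ : V → Bool) : ℝ :=
  wtIsing E₀ β lam σ / ZIsing E₀ β lam

/-- Vertices of odd degree in the graph `(V, S)`. -/
def oddVerts (S : Finset (Sym2 V)) : Finset V :=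
  Finset.univ.filter fun v => Odd (S.filter fun e => v ∈ e).card

/-- Weight of an edge subset in the subgraph-world model. -/
def wtSG (E₀ : Finset (Sym2 V)) (p : Sym2 V → ℝ) (η : V → ℝ) (S : Finset (Sym2 V)) : ℝ :=
  (∏ e ∈ S, p e) * (∏ f ∈ E₀ \ S, (1 - p f)) * ∏ v ∈ oddVerts S, η v

/-- Subgraph-world partition function. -/
def ZSG (E₀ : Finset (Sym2 V)) (p : Sym2 V → ℝ) (η : V → ℝ) : ℝ :=
  ∑ S ∈ E₀.powerset, wtSG E₀ p η S

/-- Subgraph-world distribution. -/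
def piSG (E₀ : Finset (Sym2 V)) (p : Sym2 V → ℝ) (η : V → ℝ) (S : Finset (Sym2 V)) : ℝ :=
  wtSG E₀ p η S / ZSG E₀ p η

/-- The transformation `P_{I→R}` from Ising configurations to edge subsets. -/
def PIR (E₀ : Finset (Sym2 V)) (β : Sym2 V → ℝ) (σ : V → Bool) (S : Finset (Sym2 V)) : ℝ :=
  if S ⊆ monoEdges E₀ σ then
    (∏ e ∈ S, (1 - (β e)⁻¹)) * ∏ f ∈ monoEdges E₀ σ \ S, (β f)⁻¹
  else 0

/-- The transformation `P_{R→I}` from edge subsets to Ising configurations. -/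
def PRI (E₀ : Finset (Sym2 V)) (lam : V → ℝ) (S : Finset (Sym2 V)) (σ : V → Bool) : ℝ :=
  if S ⊆ monoEdges E₀ σ then
    ∏ C ∈ kappa S, ((∏ v ∈ C, if σ v then lam v else 1) / (1 + ∏ v ∈ C, lam v))
  else 0

/-- Swendsen-Wang dynamics for the Ising model: `P_{I→R} ⬝ P_{R→I}`. -/
def PSWIsing (E₀ : Finset (Sym2 V)) (β : Sym2 V → ℝ) (lam : V → ℝ) (σ τ : V → Bool) : ℝ :=
  ∑ S ∈ E₀.powerset, PIR E₀ β σ S * PRI E₀ lam S τ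

/-- Swendsen-Wang dynamics for the weighted random cluster model: `P_{R→I} ⬝ P_{I→R}`. -/
def PSWwrc (E₀ : Finset (Sym2 V)) (β : Sym2 V → ℝ) (lam : V → ℝ)
    (S S' : Finset (Sym2 V)) : ℝ :=
  ∑ σ : V → Bool, PRI E₀ lam S σ * PIR E₀ β σ S'

/-- Lazy edge-flipping (Metropolis) dynamics for a distribution `pi` on subsets of `E₀`. -/
def PEF (E₀ : Finset (Sym2 V)) (pi : Finset (Sym2 V) → ℝ) (x y : Finset (Sym2 V)) : ℝ :=
  if x = y then
    1 - (1 / (2 * (E₀.card : ℝ))) * ∑ e ∈ E₀, min 1 (pi (symmDiff x {e}) / pi x)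
  else if (symmDiff x y).card = 1 then
    (1 / (2 * (E₀.card : ℝ))) * min 1 (pi y / pi x)
  else 0

/-- Variance of `f` with respect to a distribution `pi` supported on `states`. -/
def varOn {α : Type*} (states : Finset α) (pi f : α → ℝ) : ℝ :=
  (∑ x ∈ states, pi x * f x ^ 2) - (∑ x ∈ states, pi x * f x) ^ 2

/-- Dirichlet form of a Markov kernel `P` with stationary distribution `pi` on `states`. -/
def dirichletOn {α : Type*} (states : Finset α) (pi : α → ℝ) (P : α → α → ℝ) (f : α → ℝ) : ℝ :=
  ∑ x ∈ states, pi x * f x * (f x - ∑ y ∈ states, P x y * f y)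

/-- Spectral gap of a reversible Markov kernel `P` with stationary distribution `pi`. -/
def gapOn {α : Type*} (states : Finset α) (pi : α → ℝ) (P : α → α → ℝ) : ℝ :=
  sInf ((fun f : α → ℝ => dirichletOn states pi P f / varOn states pi f) ''
    {f | varOn states pi f ≠ 0})

/-- Total variation distance between two distributions on `states`. -/
def dTV {α : Type*} (states : Finset α) (μ ν : α → ℝ) : ℝ :=
  (1 / 2) * ∑ z ∈ states, |μ z - ν z|

/-- `t`-step transition probabilities of the Markov kernel `P` on state space `states`. -/
def kpow {α : Type*} (states : Finset α) (P : α → α → ℝ) : ℕ → α → α → ℝ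
  | 0 => fun x y => if x = y then 1 else 0
  | (t + 1) => fun x y => ∑ z ∈ states, P x z * kpow states P t z y



def closedSet (S : Finset (Sym2 V)) (A : Finset V) : Prop :=
  ∀ u v : V, s(u, v) ∈ S → (u ∈ A ↔ v ∈ A)

lemma mem_compOf_self (S : Finset (Sym2 V)) (v : V) : v ∈ compOf S v := by
  simp only [compOf, mem_filter, mem_univ, true_and]
  exact SimpleGraph.Reachable.refl v

lemma compOf_eq_of_mem {S : Finset (Sym2 V)} {u v : V} (h : u ∈ compOf S v) :
    compOf S u = compOf S v := by
  simp only [compOf, mem_filter, mem_univ, true_and] at h ⊢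
  ext w
  simp only [compOf, mem_filter, mem_univ, true_and]
  exact ⟨fun hw => h.trans hw, fun hw => h.symm.trans hw⟩

lemma compOf_mem_kappa (S : Finset (Sym2 V)) (v : V) : compOf S v ∈ kappa S :=
  mem_image.mpr ⟨v, mem_univ v, rfl⟩

lemma kappa_nonempty {S : Finset (Sym2 V)} {C : Finset V} (h : C ∈ kappa S) : C.Nonempty := by
  obtain ⟨v, -, rfl⟩ := mem_image.mp h
  exact ⟨v, mem_compOf_self S v⟩

lemma kappa_eq_of_mem {S : Finset (Sym2 V)} {C C' : Finset V} {v : V}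
    (hC : C ∈ kappa S) (hC' : C' ∈ kappa S) (h : v ∈ C) (h' : v ∈ C') : C = C' := by
  obtain ⟨x, -, rfl⟩ := mem_image.mp hC
  obtain ⟨y, -, rfl⟩ := mem_image.mp hC'
  rw [← compOf_eq_of_mem h, ← compOf_eq_of_mem h']

lemma closed_mem_of_reachable {S : Finset (Sym2 V)} {A : Finset V} (hA : closedSet S A) :
    ∀ ⦃v u : V⦄, (SimpleGraph.fromEdgeSet (↑S : Set (Sym2 V))).Walk v u → v ∈ A → u ∈ A := by
  intro v u w
  induction w with
  | nil => exact fun h => h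
  | cons h p ih =>
      intro hv
      rw [SimpleGraph.fromEdgeSet_adj] at h
      exact ih ((hA _ _ (by exact_mod_cast h.1)).mp hv)

lemma mem_comp_of_adj {S : Finset (Sym2 V)} {C : Finset V} {u v : V}
    (hC : C ∈ kappa S) (he : s(u, v) ∈ S) (hne : u ≠ v) (hu : u ∈ C) : v ∈ C := by
  obtain ⟨x, -, rfl⟩ := mem_image.mp hC
  simp only [compOf, mem_filter, mem_univ, true_and] at hu ⊢
  exact hu.trans (SimpleGraph.Adj.reachable
    (SimpleGraph.fromEdgeSet_adj _ |>.mpr ⟨by exact_mod_cast he, hne⟩))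

lemma closedSet_biUnion {S : Finset (Sym2 V)} (hS : ∀ e ∈ S, ¬ e.IsDiag)
    {T : Finset (Finset V)} (hT : T ⊆ kappa S) : closedSet S (T.biUnion id) := by
  intro u v huv
  have hne : u ≠ v := fun h => hS _ huv (by rw [h]; exact Sym2.mk_isDiag_iff.mpr rfl)
  constructor
  · intro hu
    obtain ⟨C, hCT, hu⟩ := mem_biUnion.mp hu
    exact mem_biUnion.mpr ⟨C, hCT, mem_comp_of_adj (hT hCT) huv hne hu⟩
  · intro hv
    obtain ⟨C, hCT, hv⟩ := mem_biUnion.mp hv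
    have : s(v, u) ∈ S := by rwa [Sym2.eq_swap] at huv
    exact mem_biUnion.mpr ⟨C, hCT, mem_comp_of_adj (hT hCT) this hne.symm hv⟩

lemma clusterProd_eq_sum_closed (S : Finset (Sym2 V)) (hS : ∀ e ∈ S, ¬ e.IsDiag) (lam : V → ℝ) :
    clusterProd S lam = ∑ A ∈ univ.powerset.filter (closedSet S), ∏ v ∈ A, lam v := by
  have h1 : clusterProd S lam = ∑ T ∈ (kappa S).powerset, ∏ C ∈ T, ∏ u ∈ C, lam u := by
    unfold clusterProd
    simp_rw [add_comm (1 : ℝ)]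
    rw [Finset.prod_add]
    simp
  rw [h1]
  refine Finset.sum_nbij' (fun T => T.biUnion id) (fun A => (kappa S).filter (· ⊆ A))
    ?_ ?_ ?_ ?_ ?_
  · intro T hT
    rw [mem_powerset] at hT
    exact mem_filter.mpr ⟨mem_powerset.mpr (subset_univ _), closedSet_biUnion hS hT⟩
  · intro A _
    exact mem_powerset.mpr (filter_subset _ _)
  · intro T hT
    rw [mem_powerset] at hT
    ext C
    simp only [mem_filter]
    constructor
    · rintro ⟨hCk, hsub⟩
      obtain ⟨v, hv⟩ := kappa_nonempty hCk
      obtain ⟨C', hC'T, hv'⟩ := mem_biUnion.mp (hsub hv)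
      rwa [kappa_eq_of_mem hCk (hT hC'T) hv hv']
    · intro hCT
      exact ⟨hT hCT, Finset.subset_biUnion_of_mem id hCT⟩
  · intro A hA
    have hA' : closedSet S A := (mem_filter.mp hA).2
    ext v
    constructor
    · intro hv
      obtain ⟨C, hC, hvC⟩ := mem_biUnion.mp hv
      exact (mem_filter.mp hC).2 hvC
    · intro hv
      refine mem_biUnion.mpr ⟨compOf S v, mem_filter.mpr ⟨compOf_mem_kappa S v, ?_⟩,
        mem_compOf_self S v⟩
      intro u hu
      simp only [compOf, mem_filter, mem_univ, true_and] at hu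
      obtain ⟨w⟩ := hu
      exact closed_mem_of_reachable hA' w hv
  · intro T hT
    rw [mem_powerset] at hT
    refine (Finset.prod_biUnion ?_).symm
    intro C hC C' hC' hne
    show Disjoint C C'
    rw [Finset.disjoint_left]
    intro v hvC hvC'
    exact hne (kappa_eq_of_mem (hT hC) (hT hC') hvC hvC')

lemma card_filter_mem_edge {A : Finset V} {u v : V} (hne : u ≠ v) :
    (A.filter (fun x => x ∈ s(u, v))).card
      = (if u ∈ A then 1 else 0) + (if v ∈ A then 1 else 0) := by
  by_cases hu : u ∈ A <;> by_cases hv : v ∈ A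
  · have h : A.filter (fun x => x ∈ s(u, v)) = {u, v} := by
      ext x; simp only [mem_filter, Sym2.mem_iff, mem_insert, mem_singleton]; aesop
    rw [h, Finset.card_pair hne]; simp [hu, hv]
  · have h : A.filter (fun x => x ∈ s(u, v)) = {u} := by
      ext x; simp only [mem_filter, Sym2.mem_iff, mem_singleton]
      constructor
      · rintro ⟨hx, rfl | rfl⟩ <;> [rfl; exact absurd hx hv]
      · rintro rfl; exact ⟨hu, Or.inl rfl⟩
    rw [h]; simp [hu, hv]
  · have h : A.filter (fun x => x ∈ s(u, v)) = {v} := by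
      ext x; simp only [mem_filter, Sym2.mem_iff, mem_singleton]
      constructor
      · rintro ⟨hx, rfl | rfl⟩ <;> [exact absurd hx hu; rfl]
      · rintro rfl; exact ⟨hv, Or.inr rfl⟩
    rw [h]; simp [hu, hv]
  · have h : A.filter (fun x => x ∈ s(u, v)) = ∅ := by
      ext x; simp only [mem_filter, Sym2.mem_iff, notMem_empty, iff_false, not_and]
      rintro hx (rfl | rfl) <;> [exact hu hx; exact hv hx]
    rw [h]; simp [hu, hv]

lemma edge_factor {A : Finset V} {u v : V} (hne : u ≠ v) :
    (1 + (-1 : ℝ) ^ ((A.filter (fun x => x ∈ s(u, v))).card))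
      = if (u ∈ A ↔ v ∈ A) then 2 else 0 := by
  rw [card_filter_mem_edge hne]
  by_cases hu : u ∈ A <;> by_cases hv : v ∈ A <;> simp [hu, hv] <;> norm_num

lemma prod_edge_factors (S : Finset (Sym2 V)) (hS : ∀ e ∈ S, ¬ e.IsDiag) (A : Finset V) :
    (∏ e ∈ S, (1 + (-1 : ℝ) ^ ((A.filter (fun x => x ∈ e)).card)))
      = if closedSet S A then (2 : ℝ) ^ S.card else 0 := by
  by_cases h : closedSet S A
  · rw [if_pos h, ← Finset.prod_const]
    refine Finset.prod_congr rfl ?_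
    intro e he
    induction e using Sym2.ind with
    | _ u v =>
      have hne : u ≠ v := fun hh => hS _ he (by rw [hh]; exact Sym2.mk_isDiag_iff.mpr rfl)
      rw [edge_factor hne, if_pos (h u v he)]
  · rw [if_neg h]
    obtain ⟨u, v, he, hiff⟩ : ∃ u v, s(u, v) ∈ S ∧ ¬(u ∈ A ↔ v ∈ A) := by
      by_contra hc
      push_neg at hc
      exact h fun u v hm => hc u v hm
    have hne : u ≠ v := fun hh => hS _ he (by rw [hh]; exact Sym2.mk_isDiag_iff.mpr rfl)
    exact Finset.prod_eq_zero he (by rw [edge_factor hne, if_neg hiff])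

lemma prod_one_add_sgn (E' : Finset (Sym2 V)) (lam : V → ℝ) (η : V → ℝ)
    (hlam : ∀ v : V, 0 ≤ lam v ∧ lam v < 1)
    (hη : ∀ v : V, η v = (1 - lam v) / (1 + lam v)) :
    (∏ v : V, (1 + lam v)) * ∏ u ∈ oddVerts E', η u
      = ∏ v : V, ((-1 : ℝ) ^ ((E'.filter (fun e => v ∈ e)).card) * lam v + 1) := by
  have hpos : ∀ v : V, (0:ℝ) < 1 + lam v := fun v => by linarith [(hlam v).1]
  have hsub : oddVerts E' ⊆ univ := subset_univ _
  have key : ∀ v ∈ oddVerts E', Odd ((E'.filter (fun e => v ∈ e)).card) := by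
    intro v hv; simpa [oddVerts] using hv
  have key2 : ∀ v ∈ (univ \ oddVerts E' : Finset V),
      Even ((E'.filter (fun e => v ∈ e)).card) := by
    intro v hv
    rcases mem_sdiff.mp hv with ⟨-, h⟩
    simpa [oddVerts, Nat.not_odd_iff_even] using h
  calc (∏ v : V, (1 + lam v)) * ∏ u ∈ oddVerts E', η u
      = ((∏ v ∈ univ \ oddVerts E', (1 + lam v)) * ∏ v ∈ oddVerts E', (1 + lam v))
          * ∏ u ∈ oddVerts E', η u := by rw [Finset.prod_sdiff hsub]
    _ = (∏ v ∈ univ \ oddVerts E', (1 + lam v)) * ∏ v ∈ oddVerts E', ((1 + lam v) * η v) := by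
        rw [mul_assoc, Finset.prod_mul_distrib]
    _ = (∏ v ∈ univ \ oddVerts E', (1 + lam v)) * ∏ v ∈ oddVerts E', (1 - lam v) := by
        congr 1
        refine Finset.prod_congr rfl fun v _ => ?_
        rw [hη v, mul_comm (1 + lam v), div_mul_cancel₀ _ (hpos v).ne']
    _ = ∏ v : V, ((-1 : ℝ) ^ ((E'.filter (fun e => v ∈ e)).card) * lam v + 1) := by
        rw [← Finset.prod_sdiff hsub]
        congr 1
        · exact Finset.prod_congr rfl fun v hv => by rw [(key2 v hv).neg_one_pow]; ring
        · exact Finset.prod_congr rfl fun v hv => by rw [(key v hv).neg_one_pow]; ring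

lemma rhs_eq_sum_closed (S : Finset (Sym2 V)) (hS : ∀ e ∈ S, ¬ e.IsDiag)
    (lam η : V → ℝ)
    (hlam : ∀ v : V, 0 ≤ lam v ∧ lam v < 1)
    (hη : ∀ v : V, η v = (1 - lam v) / (1 + lam v)) :
    (∏ v : V, (1 + lam v)) * (1 / 2 : ℝ) ^ S.card *
        ∑ E' ∈ S.powerset, ∏ u ∈ oddVerts E', η u
      = ∑ A ∈ univ.powerset.filter (closedSet S), ∏ v ∈ A, lam v := by
  have step1 : ∀ E' ∈ S.powerset,
      (∏ v : V, (1 + lam v)) * ∏ u ∈ oddVerts E', η u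
        = ∑ A ∈ (univ : Finset V).powerset,
            (∏ v ∈ A, lam v) * ∏ e ∈ E', (-1 : ℝ) ^ ((A.filter (fun x => x ∈ e)).card) := by
    intro E' _
    rw [prod_one_add_sgn E' lam η hlam hη, Finset.prod_add]
    refine Finset.sum_congr rfl fun A _ => ?_
    rw [Finset.prod_const_one, mul_one, Finset.prod_mul_distrib]
    have hswap : ∏ v ∈ A, (-1 : ℝ) ^ ((E'.filter (fun e => v ∈ e)).card)
        = ∏ e ∈ E', (-1 : ℝ) ^ ((A.filter (fun x => x ∈ e)).card) := by
      rw [Finset.prod_pow_eq_pow_sum, Finset.prod_pow_eq_pow_sum]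
      congr 1
      simp_rw [Finset.card_filter]
      exact Finset.sum_comm
    rw [hswap, mul_comm]
  have hsum : ∀ A : Finset V,
      (∑ E' ∈ S.powerset, ∏ e ∈ E', (-1 : ℝ) ^ ((A.filter (fun x => x ∈ e)).card))
        = if closedSet S A then (2 : ℝ) ^ S.card else 0 := by
    intro A
    have h1 : ∏ e ∈ S, ((-1 : ℝ) ^ ((A.filter (fun x => x ∈ e)).card) + 1)
        = ∑ E' ∈ S.powerset, ∏ e ∈ E', (-1 : ℝ) ^ ((A.filter (fun x => x ∈ e)).card) := by
      rw [Finset.prod_add]; simp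
    rw [← h1, ← prod_edge_factors S hS A]
    exact Finset.prod_congr rfl fun e _ => by ring
  calc (∏ v : V, (1 + lam v)) * (1 / 2 : ℝ) ^ S.card *
        ∑ E' ∈ S.powerset, ∏ u ∈ oddVerts E', η u
      = (1 / 2 : ℝ) ^ S.card * ∑ E' ∈ S.powerset,
          ((∏ v : V, (1 + lam v)) * ∏ u ∈ oddVerts E', η u) := by
        rw [mul_comm (∏ v : V, (1 + lam v)) ((1 / 2 : ℝ) ^ S.card), mul_assoc,
          Finset.mul_sum]
    _ = (1 / 2 : ℝ) ^ S.card * ∑ E' ∈ S.powerset, ∑ A ∈ (univ : Finset V).powerset,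
          (∏ v ∈ A, lam v) * ∏ e ∈ E', (-1 : ℝ) ^ ((A.filter (fun x => x ∈ e)).card) := by
        rw [Finset.sum_congr rfl step1]
    _ = (1 / 2 : ℝ) ^ S.card * ∑ A ∈ (univ : Finset V).powerset,
          (∏ v ∈ A, lam v) * ∑ E' ∈ S.powerset,
            ∏ e ∈ E', (-1 : ℝ) ^ ((A.filter (fun x => x ∈ e)).card) := by
        rw [Finset.sum_comm]
        congr 1
        exact Finset.sum_congr rfl fun A _ => (Finset.mul_sum _ _ _).symm
    _ = ∑ A ∈ (univ : Finset V).powerset,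
          (if closedSet S A then ∏ v ∈ A, lam v else 0) := by
        rw [Finset.mul_sum]
        refine Finset.sum_congr rfl fun A _ => ?_
        rw [hsum A]
        by_cases h : closedSet S A
        · rw [if_pos h, if_pos h]
          have h2 : (1 / 2 : ℝ) ^ S.card * (2 : ℝ) ^ S.card = 1 := by
            rw [← mul_pow]; norm_num
          calc (1 / 2 : ℝ) ^ S.card * ((∏ v ∈ A, lam v) * (2 : ℝ) ^ S.card)
              = ((1 / 2 : ℝ) ^ S.card * (2 : ℝ) ^ S.card) * ∏ v ∈ A, lam v := by ring
            _ = ∏ v ∈ A, lam v := by rw [h2, one_mul]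
        · rw [if_neg h, if_neg h, mul_zero, mul_zero]
    _ = ∑ A ∈ univ.powerset.filter (closedSet S), ∏ v ∈ A, lam v := by
        rw [Finset.sum_filter]


/-- Holographic counting identity:
`∏_{C∈κ(V,E)} (1 + ∏_{u∈C} λ_u) = (∏_v (1+λ_v)) (1/2)^{|E|} Σ_{E'⊆E} ∏_{u∈odd(E')} η_u`
where `η_v = (1−λ_v)/(1+λ_v)`. -/
theorem cluster_counting {V : Type*} [Fintype V] [DecidableEq V]
    (G : SimpleGraph V) [DecidableRel G.Adj]
    (lam : V → ℝ) (η : V → ℝ)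
    (hlam : ∀ v : V, 0 ≤ lam v ∧ lam v < 1)
    (hη : ∀ v : V, η v = (1 - lam v) / (1 + lam v)) :
    clusterProd G.edgeFinset lam =
      (∏ v : V, (1 + lam v)) * (1 / 2 : ℝ) ^ G.edgeFinset.card *
        ∑ E' ∈ G.edgeFinset.powerset, ∏ u ∈ oddVerts E', η u := by
  have hS : ∀ e ∈ G.edgeFinset, ¬ e.IsDiag := fun e he =>
    G.not_isDiag_of_mem_edgeSet (SimpleGraph.mem_edgeFinset.mp he)
  rw [clusterProd_eq_sum_closed G.edgeFinset hS lam,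
    rhs_eq_sum_closed G.edgeFinset hS lam η hlam hη]

end
end

section
/- Let G=(V,E) be a finite simple undirected graph with n=|V| vertices, let 0 < p_e < 1/2 for all e ∈ E and 0 < λ_v ≤ 1 for all v ∈ V, and set η_v = (1−λ_v)/(1+λ_v). Define the perturbed parameters η̂_v = 1/n if η_v ≤ 1/n and η̂_v = η_v otherwise, and λ̂_v = (1−η̂_v)/(1+η̂_v). Let π_wrc be the weighted random cluster distribution with edge parameters (2p_e)_{e∈E} and vertex weights λ, and let π̂_wrc be the weighted random cluster distribution with edge parameters (2p_e)_{e∈E} and vertex weights λ̂. Then for every R ⊆ E, 1/9 ≤ π̂_wrc(R)/π_wrc(R) < e (where e is Euler's number). -/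
open Finset
open scoped Classical

noncomputable section

variable {V : Type*} [Fintype V] [DecidableEq V]

lemma ratio_bounds' (A B Zh Z ρ : ℝ) (hB : 0 < B) (hZ : 0 < Z) (hρ : 0 < ρ)
    (hAB1 : ρ * B ≤ A) (hAB2 : A ≤ B) (hZ1 : ρ * Z ≤ Zh) (hZ2 : Zh ≤ Z)
    (h9 : 1/9 ≤ ρ) (he : 1 < Real.exp 1 * ρ) :
    1/9 ≤ (A/Zh)/(B/Z) ∧ (A/Zh)/(B/Z) < Real.exp 1 := by
  have hZh : 0 < Zh := lt_of_lt_of_le (mul_pos hρ hZ) hZ1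
  have hA : 0 < A := lt_of_lt_of_le (mul_pos hρ hB) hAB1
  have key : (A/Zh)/(B/Z) = (A*Z)/(Zh*B) := by
    field_simp
  constructor
  · rw [key, le_div_iff₀ (mul_pos hZh hB)]
    calc 1/9*(Zh*B) ≤ ρ*(Zh*B) := by nlinarith [mul_pos hZh hB]
      _ ≤ ρ*(Z*B) := by nlinarith [mul_le_mul_of_nonneg_right hZ2 hB.le]
      _ = (ρ*B)*Z := by ring
      _ ≤ A*Z := mul_le_mul_of_nonneg_right hAB1 hZ.le
  · rw [key, div_lt_iff₀ (mul_pos hZh hB)]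
    have hZlt : Z < Real.exp 1 * Zh := by nlinarith [Real.exp_pos 1]
    calc A*Z ≤ B*Z := mul_le_mul_of_nonneg_right hAB2 hZ.le
      _ < B*(Real.exp 1 * Zh) := mul_lt_mul_of_pos_left hZlt hB
      _ = Real.exp 1*(Zh*B) := by ring

-- per-vertex lemma
lemma vertex_bounds' (N : ℝ) (hN : 1 ≤ N) (lv ηv ηhv lhv : ℝ)
    (hl0 : 0 < lv) (hl1 : lv ≤ 1)
    (hη : ηv = (1 - lv) / (1 + lv))
    (hηh : ηhv = if ηv ≤ 1 / N then 1 / N else ηv)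
    (hlh : lhv = (1 - ηhv) / (1 + ηhv)) :
    0 ≤ lhv ∧ lhv ≤ lv ∧ (N - 1)/(N + 1) * lv ≤ lhv := by
  have h1l : (0:ℝ) < 1 + lv := by linarith
  have hN0 : (0:ℝ) < N := by linarith
  have hN1 : (0:ℝ) < N + 1 := by linarith
  have hb0 : (0:ℝ) ≤ (N-1)/(N+1) := div_nonneg (by linarith) (by linarith)
  have hb1 : (N-1)/(N+1) ≤ 1 := (div_le_one hN1).mpr (by linarith)
  have hη0 : 0 ≤ ηv := by rw [hη]; exact div_nonneg (by linarith) (by linarith)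
  have hηval : lv = (1 - ηv)/(1 + ηv) := by
    rw [hη]
    field_simp
    ring
  by_cases hc : ηv ≤ 1/N
  · have hh : ηhv = 1/N := by rw [hηh, if_pos hc]
    have h1N : (0:ℝ) < 1/N := by positivity
    have hlhv : lhv = (N-1)/(N+1) := by
      rw [hlh, hh, div_eq_div_iff (by positivity) (ne_of_gt hN1)]
      field_simp
    refine ⟨by rw [hlhv]; exact hb0, ?_, by rw [hlhv]; nlinarith⟩
    rw [hlhv, hηval, div_le_div_iff₀ hN1 (by linarith)]
    have hnc : ηv * N ≤ 1 := (le_div_iff₀ hN0).mp hc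
    nlinarith
  · have hh : ηhv = ηv := by rw [hηh, if_neg hc]
    have hlhv : lhv = lv := by rw [hlh, hh, ← hηval]
    exact ⟨by rw [hlhv]; linarith, le_of_eq hlhv, by rw [hlhv]; nlinarith⟩

-- rho facts
lemma rho_facts' (n : ℕ) (hn : 1 ≤ n) :
    1/9 ≤ (((n:ℝ))/((n:ℝ)+1))^n ∧ 1 < Real.exp 1 * ((((n:ℝ))/((n:ℝ)+1))^n) := by
  set N : ℝ := (n : ℝ) with hNdef
  have hN : (1:ℝ) ≤ N := by rw [hNdef]; exact_mod_cast hn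
  have hN0 : (0:ℝ) < N := by linarith
  have hlt : 1 + 1/N < Real.exp (1/N) := by
    have := Real.add_one_lt_exp (x := 1/N) (by positivity)
    linarith
  have hXe : (Real.exp (1/N))^n = Real.exp 1 := by
    rw [← Real.exp_nat_mul]
    congr 1
    rw [← hNdef]
    field_simp
  have hbase : (N+1)/N = 1 + 1/N := by field_simp
  have hXlt : ((N+1)/N)^n < Real.exp 1 := by
    rw [← hXe, hbase]
    exact pow_lt_pow_left₀ hlt (by positivity) (by omega)
  have hρX : (N/(N+1))^n * ((N+1)/N)^n = 1 := by
    rw [← mul_pow, show N/(N+1)*((N+1)/N) = 1 by field_simp, one_pow]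
  have hρ0 : (0:ℝ) < (N/(N+1))^n := by positivity
  have hX0 : (0:ℝ) < ((N+1)/N)^n := by positivity
  have he9 : Real.exp 1 < 9 := by
    have := Real.exp_one_lt_d9; norm_num at this ⊢; linarith
  constructor
  · nlinarith [mul_lt_mul_of_pos_left hXlt hρ0]
  · nlinarith [mul_lt_mul_of_pos_left hXlt hρ0]

lemma mem_compOf' {S : Finset (Sym2 V)} {v u : V} :
    u ∈ compOf S v ↔ (SimpleGraph.fromEdgeSet (↑S : Set (Sym2 V))).Reachable v u := by
  simp [compOf]

lemma compOf_eq_iff' {S : Finset (Sym2 V)} {v u : V} :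
    compOf S u = compOf S v ↔ (SimpleGraph.fromEdgeSet (↑S : Set (Sym2 V))).Reachable v u := by
  constructor
  · intro h
    have h2 : u ∈ compOf S u := mem_compOf'.mpr (SimpleGraph.Reachable.refl u)
    rw [h] at h2; exact mem_compOf'.mp h2
  · intro h
    ext w
    simp only [mem_compOf']
    exact ⟨fun hw => h.trans hw, fun hw => h.symm.trans hw⟩

lemma sum_card_kappa' (S : Finset (Sym2 V)) :
    ∑ C ∈ kappa S, C.card = Fintype.card V := by
  rw [← Finset.card_univ,
    Finset.card_eq_sum_card_fiberwise (f := compOf S) (t := kappa S)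
      (fun x _ => mem_image_of_mem _ (mem_univ x))]
  refine Finset.sum_congr rfl fun C hC => ?_
  obtain ⟨v, -, rfl⟩ := mem_image.mp hC
  have he : (univ.filter fun a => compOf S a = compOf S v) = compOf S v := by
    ext u
    simp only [mem_filter, mem_univ, true_and]
    exact compOf_eq_iff'.trans mem_compOf'.symm
  rw [he]

lemma pow_half_le' (b : ℝ) (hb0 : 0 ≤ b) (hb1 : b ≤ 1) :
    ∀ k : ℕ, ((1 + b) / 2) ^ k ≤ (1 + b ^ k) / 2
  | 0 => by norm_num
  | (k+1) => by
      have ih := pow_half_le' b hb0 hb1 k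
      have hbk0 : 0 ≤ b ^ k := pow_nonneg hb0 k
      have hbk1 : b ^ k ≤ 1 := pow_le_one₀ hb0 hb1
      have h2 : (0:ℝ) ≤ (1 + b)/2 := by linarith
      calc ((1+b)/2)^(k+1) = ((1+b)/2)^k * ((1+b)/2) := pow_succ _ _
        _ ≤ (1 + b^k)/2 * ((1+b)/2) := mul_le_mul_of_nonneg_right ih h2
        _ ≤ (1 + b^(k+1))/2 := by
            have h3 : b^(k+1) = b^k * b := pow_succ _ _
            nlinarith [mul_nonneg (sub_nonneg.mpr hb1) (sub_nonneg.mpr hbk1)]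

lemma clusterProd_pos' {S : Finset (Sym2 V)} {lam : V → ℝ} (h : ∀ v, 0 ≤ lam v) :
    0 < clusterProd S lam := by
  apply Finset.prod_pos
  intro C _
  have := Finset.prod_nonneg (s := C) fun u _ => h u
  linarith

lemma clusterProd_le' {S : Finset (Sym2 V)} {lam lamh : V → ℝ}
    (h0 : ∀ v, 0 ≤ lamh v) (hle : ∀ v, lamh v ≤ lam v) :
    clusterProd S lamh ≤ clusterProd S lam := by
  apply Finset.prod_le_prod
  · intro C _
    have := Finset.prod_nonneg (s := C) fun u _ => h0 u
    linarith
  · intro C _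
    have := Finset.prod_le_prod (s := C) (f := lamh) (g := lam)
      (fun u _ => h0 u) (fun u _ => hle u)
    linarith

lemma clusterProd_ge' {S : Finset (Sym2 V)} {lam lamh : V → ℝ} {b : ℝ}
    (hb0 : 0 ≤ b) (hb1 : b ≤ 1)
    (hlam0 : ∀ v, 0 < lam v) (hlam1 : ∀ v, lam v ≤ 1)
    (hbl : ∀ v, b * lam v ≤ lamh v) :
    ((1 + b)/2) ^ (Fintype.card V) * clusterProd S lam ≤ clusterProd S lamh := by
  have hhalf : (0:ℝ) ≤ (1+b)/2 := by linarith
  have key : ∀ C ∈ kappa S,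
      ((1+b)/2) ^ C.card * (1 + ∏ u ∈ C, lam u) ≤ 1 + ∏ u ∈ C, lamh u := by
    intro C _
    have hP0 : 0 < ∏ u ∈ C, lam u := Finset.prod_pos fun u _ => hlam0 u
    have hP1 : (∏ u ∈ C, lam u) ≤ 1 :=
      Finset.prod_le_one (fun u _ => (hlam0 u).le) (fun u _ => hlam1 u)
    have hPh : b ^ C.card * (∏ u ∈ C, lam u) ≤ ∏ u ∈ C, lamh u := by
      have h1 : ∏ u ∈ C, (b * lam u) ≤ ∏ u ∈ C, lamh u :=
        Finset.prod_le_prod (fun u _ => mul_nonneg hb0 (hlam0 u).le) (fun u _ => hbl u)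
      rwa [Finset.prod_mul_distrib, Finset.prod_const] at h1
    have hbk0 : 0 ≤ b ^ C.card := pow_nonneg hb0 _
    have hbk1 : b ^ C.card ≤ 1 := pow_le_one₀ hb0 hb1
    calc ((1+b)/2) ^ C.card * (1 + ∏ u ∈ C, lam u)
        ≤ (1 + b ^ C.card)/2 * (1 + ∏ u ∈ C, lam u) :=
          mul_le_mul_of_nonneg_right (pow_half_le' b hb0 hb1 C.card) (by linarith)
      _ ≤ 1 + b ^ C.card * (∏ u ∈ C, lam u) := by nlinarith
      _ ≤ 1 + ∏ u ∈ C, lamh u := by linarith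
  calc ((1 + b)/2) ^ (Fintype.card V) * clusterProd S lam
      = ∏ C ∈ kappa S, (((1+b)/2) ^ C.card * (1 + ∏ u ∈ C, lam u)) := by
        rw [Finset.prod_mul_distrib, Finset.prod_pow_eq_pow_sum, sum_card_kappa']
        rfl
    _ ≤ ∏ C ∈ kappa S, (1 + ∏ u ∈ C, lamh u) := by
        refine Finset.prod_le_prod (fun C _ => ?_) key
        have hP0 : 0 < ∏ u ∈ C, lam u := Finset.prod_pos fun u _ => hlam0 u
        have := pow_nonneg hhalf C.card
        nlinarith
    _ = clusterProd S lamh := rfl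

/-- Comparison of the weighted random cluster distribution with its perturbed version:
replacing `η_v = (1−λ_v)/(1+λ_v)` by `η̂_v = max{η_v, 1/n}` (i.e. `λ_v` by
`λ̂_v = (1−η̂_v)/(1+η̂_v)`) changes every probability by a factor in `[1/9, e)`. -/
theorem wrc_perturb_dist_ratio {V : Type*} [Fintype V] [DecidableEq V]
    (G : SimpleGraph V) [DecidableRel G.Adj]
    (p : Sym2 V → ℝ) (lam η ηh lamh : V → ℝ)
    (hp : ∀ e ∈ G.edgeFinset, 0 < p e ∧ p e < 1 / 2)
    (hlam : ∀ v : V, 0 < lam v ∧ lam v ≤ 1)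
    (hη : ∀ v : V, η v = (1 - lam v) / (1 + lam v))
    (hηh : ∀ v : V, ηh v =
      if η v ≤ 1 / (Fintype.card V : ℝ) then 1 / (Fintype.card V : ℝ) else η v)
    (hlamh : ∀ v : V, lamh v = (1 - ηh v) / (1 + ηh v)) :
    ∀ R ∈ G.edgeFinset.powerset,
      1 / 9 ≤ piWRC G.edgeFinset (fun e => 2 * p e) lamh R /
          piWRC G.edgeFinset (fun e => 2 * p e) lam R ∧
        piWRC G.edgeFinset (fun e => 2 * p e) lamh R /
          piWRC G.edgeFinset (fun e => 2 * p e) lam R < Real.exp 1 := by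
  intro R hR
  by_cases hV : Fintype.card V = 0
  · -- V is empty: both distributions are trivially equal to 1 at R = ∅
    haveI : IsEmpty V := Fintype.card_eq_zero_iff.mp hV
    haveI : IsEmpty (Sym2 V) := inferInstance
    have hE : G.edgeFinset = ∅ := Finset.eq_empty_of_isEmpty _
    have hR' : R = ∅ := by
      have := Finset.mem_powerset.mp hR
      rw [hE] at this
      exact Finset.subset_empty.mp this
    have hke : kappa (∅ : Finset (Sym2 V)) = ∅ := by
      simp [kappa, Finset.univ_eq_empty]
    have hcp : ∀ lam' : V → ℝ, clusterProd (∅ : Finset (Sym2 V)) lam' = 1 := by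
      intro lam'; rw [clusterProd, hke, Finset.prod_empty]
    have hpi : ∀ lam' : V → ℝ, piWRC G.edgeFinset (fun e => 2 * p e) lam' R = 1 := by
      intro lam'
      rw [hR', piWRC, ZWRC, hE]
      rw [Finset.powerset_empty, Finset.sum_singleton]
      rw [wtWRC, hcp]
      norm_num
    rw [hpi, hpi]
    norm_num
  · -- main case : V is nonempty
    have hn1 : 1 ≤ Fintype.card V := Nat.one_le_iff_ne_zero.mpr hV
    have hN : (1:ℝ) ≤ (Fintype.card V : ℝ) := by exact_mod_cast hn1
    set N : ℝ := (Fintype.card V : ℝ) with hNdef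
    set b : ℝ := (N - 1)/(N + 1) with hbdef
    have hb0 : 0 ≤ b := div_nonneg (by linarith) (by linarith)
    have hb1 : b ≤ 1 := (div_le_one (by linarith)).mpr (by linarith)
    -- per-vertex bounds
    have hv : ∀ v : V, 0 ≤ lamh v ∧ lamh v ≤ lam v ∧ b * lam v ≤ lamh v := fun v =>
      vertex_bounds' N hN (lam v) (η v) (ηh v) (lamh v)
        (hlam v).1 (hlam v).2 (hη v) (hηh v) (hlamh v)
    have hlam0 : ∀ v, 0 < lam v := fun v => (hlam v).1
    have hlam1 : ∀ v, lam v ≤ 1 := fun v => (hlam v).2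
    -- rho
    set ρ : ℝ := ((1 + b)/2) ^ (Fintype.card V) with hρdef
    have hhalf : (1 + b)/2 = N/(N + 1) := by
      rw [hbdef]
      field_simp
      ring
    have hρeq : ρ = (N/(N+1)) ^ (Fintype.card V) := by rw [hρdef, hhalf]
    have hρ0 : 0 < ρ := by
      rw [hρeq]; positivity
    obtain ⟨hρ9, hρe⟩ := rho_facts' (Fintype.card V) hn1
    rw [← hNdef, ← hρeq] at hρ9 hρe
    -- edge factor positivity
    have hq : ∀ e ∈ G.edgeFinset, 0 < 2 * p e ∧ 2 * p e < 1 := by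
      intro e he
      obtain ⟨h1, h2⟩ := hp e he
      constructor <;> linarith
    have hFpos : ∀ S ∈ G.edgeFinset.powerset,
        0 < (∏ e ∈ S, 2 * p e) * (∏ f ∈ G.edgeFinset \ S, (1 - 2 * p f)) := by
      intro S hS
      have hS' := Finset.mem_powerset.mp hS
      apply mul_pos
      · exact Finset.prod_pos fun e he => (hq e (hS' he)).1
      · exact Finset.prod_pos fun f hf => by linarith [(hq f (Finset.mem_sdiff.mp hf).1).2]
    -- weight comparison
    have hW : ∀ S ∈ G.edgeFinset.powerset,
        ρ * wtWRC G.edgeFinset (fun e => 2 * p e) lam S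
            ≤ wtWRC G.edgeFinset (fun e => 2 * p e) lamh S ∧
          wtWRC G.edgeFinset (fun e => 2 * p e) lamh S
            ≤ wtWRC G.edgeFinset (fun e => 2 * p e) lam S := by
      intro S hS
      have hF := hFpos S hS
      have h1 := clusterProd_ge' (S := S) hb0 hb1 hlam0 hlam1 (fun v => (hv v).2.2)
      rw [← hρdef] at h1
      have h2 := clusterProd_le' (S := S) (fun v => (hv v).1) (fun v => (hv v).2.1)
      rw [wtWRC, wtWRC]
      constructor
      · calc ρ * ((∏ e ∈ S, 2 * p e) * (∏ f ∈ G.edgeFinset \ S, (1 - 2 * p f))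
              * clusterProd S lam)
            = ((∏ e ∈ S, 2 * p e) * (∏ f ∈ G.edgeFinset \ S, (1 - 2 * p f)))
              * (ρ * clusterProd S lam) := by ring
          _ ≤ ((∏ e ∈ S, 2 * p e) * (∏ f ∈ G.edgeFinset \ S, (1 - 2 * p f)))
              * clusterProd S lamh := mul_le_mul_of_nonneg_left h1 hF.le
      · exact mul_le_mul_of_nonneg_left h2 hF.le
    have hwpos : ∀ S ∈ G.edgeFinset.powerset,
        0 < wtWRC G.edgeFinset (fun e => 2 * p e) lam S := by
      intro S hS
      rw [wtWRC]
      exact mul_pos (hFpos S hS) (clusterProd_pos' fun v => (hlam0 v).le)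
    -- partition function comparison
    have hZpos : 0 < ZWRC G.edgeFinset (fun e => 2 * p e) lam :=
      Finset.sum_pos hwpos ⟨∅, Finset.empty_mem_powerset _⟩
    have hZle : ZWRC G.edgeFinset (fun e => 2 * p e) lamh
        ≤ ZWRC G.edgeFinset (fun e => 2 * p e) lam :=
      Finset.sum_le_sum fun S hS => (hW S hS).2
    have hZge : ρ * ZWRC G.edgeFinset (fun e => 2 * p e) lam
        ≤ ZWRC G.edgeFinset (fun e => 2 * p e) lamh := by
      rw [ZWRC, ZWRC, Finset.mul_sum]
      exact Finset.sum_le_sum fun S hS => (hW S hS).1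
    exact ratio_bounds' _ _ _ _ ρ (hwpos R hR) hZpos hρ0
      (hW R hR).1 (hW R hR).2 hZge hZle hρ9 hρe

end
end
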